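/- (Entropy Distribution Principle) Let (M,d) be a compact metric space and f : M → M a continuous map. Let Z ⊆ M be an arbitrary Borel set. Suppose there exist ε > 0 and s ≥ 0 such that one can find a sequence of Borel probability measures (μ_k), a constant K > 0 and an integer N satisfying: limsup_{k→∞} μ_k(B_n(x,ε)) ≤ K e^{−ns} for every Bowen ball B_n(x,ε) with n ≥ N and B_n(x,ε) ∩ Z ≠ ∅. Furthermore assume that at least one weak* limit ν of a subsequence of (μ_k) satisfies ν(Z) > 0. Then the Bowen topological entropy of Z at scale ε satisfies h_top(Z,ε) ≥ s. -/

import Mathlib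

open MeasureTheory Filter Topology
open scoped ENNReal

/-- The Bowen ball `B_n(x, ε) = {y : d(f^i x, f^i y) < ε for all 0 ≤ i ≤ n-1}`. -/
def bowenBall {M : Type*} [PseudoMetricSpace M] (f : M → M) (n : ℕ) (ε : ℝ) (x : M) : Set M :=
  {y | ∀ i < n, dist (f^[i] x) (f^[i] y) < ε}

/-- The weight sum `∑ e^{-n s}` over a (finite or countable) collection `C` of pairs
`(x, n)`, each representing a Bowen ball `B_n(x, ε)`. -/
noncomputable def bowenCoverSum {M : Type*} (s : ℝ) (C : Set (M × ℕ)) : ℝ≥0∞ :=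
  ∑' p : C, ENNReal.ofReal (Real.exp (-s * ((p : M × ℕ).2 : ℝ)))

/-- `m(Z, s, N, ε)`: the infimum of `∑ e^{-n s}` over all finite or countable covers of `Z`
by Bowen balls `B_n(x, ε)` with `n ≥ N`. -/
noncomputable def bowenPreMeasure {M : Type*} [PseudoMetricSpace M] (f : M → M) (Z : Set M)
    (s ε : ℝ) (N : ℕ) : ℝ≥0∞ :=
  ⨅ (C : Set (M × ℕ)) (_ : C.Countable) (_ : ∀ p ∈ C, N ≤ p.2)
    (_ : Z ⊆ ⋃ p ∈ C, bowenBall f p.2 ε p.1), bowenCoverSum s C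

/-- `m(Z, s, ε) = lim_{N → ∞} m(Z, s, N, ε)`; since `m(Z, s, N, ε)` is nondecreasing in `N`,
the limit equals the supremum. -/
noncomputable def bowenMeasureOf {M : Type*} [PseudoMetricSpace M] (f : M → M) (Z : Set M)
    (s ε : ℝ) : ℝ≥0∞ :=
  ⨆ N : ℕ, bowenPreMeasure f Z s ε N

/-- Entropy Distribution Principle: with probability measures `μ_k` satisfying
`limsup_k μ_k(B_n(x,ε)) ≤ K e^{-n s}` for every Bowen ball `B_n(x,ε)` (`n ≥ N`) meeting `Z`,
and some weak* limit `ν` of a subsequence of `(μ_k)` with `ν Z > 0`, the Bowen topological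
entropy of `Z` at scale `ε` satisfies `h_top(Z, ε) ≥ s`: since
`h_top(Z, ε) = inf {t : m(Z, t, ε) = 0}`, this says `s` is a lower bound of that set. -/
theorem entropy_distribution_principle
    {M : Type*} [MetricSpace M] [CompactSpace M] [MeasurableSpace M] [BorelSpace M]
    (f : M → M) (hf : Continuous f) (Z : Set M)
    (ε s : ℝ) (hε : 0 < ε) (hs : 0 ≤ s)
    (μ : ℕ → Measure M) (hμ : ∀ k, IsProbabilityMeasure (μ k))
    (K : ℝ) (hK : 0 < K) (N : ℕ)
    (hbound : ∀ (x : M) (n : ℕ), N ≤ n → (bowenBall f n ε x ∩ Z).Nonempty →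
      limsup (fun k => μ k (bowenBall f n ε x)) atTop ≤
        ENNReal.ofReal (K * Real.exp (-s * n)))
    (ν : Measure M) (hν : IsProbabilityMeasure ν)
    (l : ℕ → ℕ) (hl : StrictMono l)
    (hlim : ∀ ψ : C(M, ℝ), Tendsto (fun k => ∫ y, ψ y ∂(μ (l k))) atTop
      (𝓝 (∫ y, ψ y ∂ν)))
    (hνZ : 0 < ν Z) :
    ∀ t : ℝ, bowenMeasureOf f Z t ε = 0 → s ≤ t := by
  intro t ht
  by_contra hts
  push_neg at hts
  have hst : 0 < s - t := sub_pos.mpr hts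
  -- Bowen balls are open
  have hopen : ∀ (x : M) (n : ℕ), IsOpen (bowenBall f n ε x) := by
    intro x n
    have : bowenBall f n ε x =
        ⋂ i ∈ Finset.range n, (fun y => dist (f^[i] x) (f^[i] y)) ⁻¹' (Set.Iio ε) := by
      ext y; simp [bowenBall]
    rw [this]
    exact isOpen_biInter_finset fun i _ =>
      isOpen_Iio.preimage (continuous_const.dist (hf.iterate i))
  -- weak* convergence of subsequence, as ProbabilityMeasure
  let P : ℕ → ProbabilityMeasure M := fun k => ⟨μ (l k), hμ (l k)⟩
  let Q : ProbabilityMeasure M := ⟨ν, hν⟩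
  have hPQ : Tendsto P atTop (𝓝 Q) := by
    rw [ProbabilityMeasure.tendsto_iff_forall_integral_tendsto]
    intro g
    exact hlim g.toContinuousMap
  -- key measure bound for ν
  have key : ∀ (x : M) (n : ℕ), N ≤ n → (bowenBall f n ε x ∩ Z).Nonempty →
      ν (bowenBall f n ε x) ≤ ENNReal.ofReal (K * Real.exp (-s * n)) := by
    intro x n hn hne
    have h1 : ν (bowenBall f n ε x) ≤
        liminf (fun k => μ (l k) (bowenBall f n ε x)) atTop :=
      ProbabilityMeasure.le_liminf_measure_open_of_tendsto hPQ (hopen x n)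
    have h2 : liminf (fun k => μ (l k) (bowenBall f n ε x)) atTop ≤
        limsup (fun k => μ (l k) (bowenBall f n ε x)) atTop := liminf_le_limsup
    have h3 : limsup (fun k => μ (l k) (bowenBall f n ε x)) atTop ≤
        limsup (fun k => μ k (bowenBall f n ε x)) atTop := by
      have hmap : Filter.map l atTop ≤ atTop := hl.tendsto_atTop
      calc limsup (fun k => μ (l k) (bowenBall f n ε x)) atTop
          = limsup (fun k => μ k (bowenBall f n ε x)) (Filter.map l atTop) :=
            Filter.limsup_comp (fun k => μ k (bowenBall f n ε x)) l atTop
        _ ≤ limsup (fun k => μ k (bowenBall f n ε x)) atTop :=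
            limsup_le_limsup_of_le hmap
    exact h1.trans (h2.trans (h3.trans (hbound x n hn hne)))
  -- for every m, ν Z ≤ K e^{-(s-t) m}
  have main : ∀ m : ℕ, ν Z ≤ ENNReal.ofReal (K * Real.exp (-(s - t) * m)) := by
    intro m
    set N' : ℕ := max N m with hN'
    have h0 : bowenPreMeasure f Z t ε N' = 0 :=
      le_antisymm (ht ▸ le_iSup (fun n => bowenPreMeasure f Z t ε n) N') zero_le
    have h1 : bowenPreMeasure f Z t ε N' < 1 := by rw [h0]; exact zero_lt_one
    rw [bowenPreMeasure] at h1
    simp only [iInf_lt_iff] at h1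
    obtain ⟨C, hCc, hCN, hCZ, hCsum⟩ := h1
    -- restrict to balls meeting Z
    set C' : Set (M × ℕ) := {p ∈ C | (bowenBall f p.2 ε p.1 ∩ Z).Nonempty} with hC'
    have hC'sub : C' ⊆ C := fun p hp => hp.1
    have hC'c : C'.Countable := hCc.mono hC'sub
    have hC'Z : Z ⊆ ⋃ p ∈ C', bowenBall f p.2 ε p.1 := by
      intro z hz
      obtain ⟨p, hp, hzp⟩ := Set.mem_iUnion₂.mp (hCZ hz)
      exact Set.mem_iUnion₂.mpr ⟨p, ⟨hp, ⟨z, hzp, hz⟩⟩, hzp⟩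
    have step1 : ν Z ≤ ∑' p : C', ν (bowenBall f (p : M × ℕ).2 ε (p : M × ℕ).1) :=
      (measure_mono hC'Z).trans (measure_biUnion_le ν hC'c _)
    have step2 : (∑' p : C', ν (bowenBall f (p : M × ℕ).2 ε (p : M × ℕ).1)) ≤
        ∑' p : C', (ENNReal.ofReal (K * Real.exp (-(s - t) * N')) *
          ENNReal.ofReal (Real.exp (-t * ((p : M × ℕ).2 : ℝ)))) := by
      apply ENNReal.tsum_le_tsum
      rintro ⟨p, hpC, hpne⟩
      have hn : N ≤ p.2 := le_trans (le_max_left N m) (hCN p hpC)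
      have hn' : (N' : ℝ) ≤ p.2 := Nat.cast_le.mpr (hCN p hpC)
      refine (key p.1 p.2 hn hpne).trans ?_
      rw [← ENNReal.ofReal_mul (by positivity)]
      apply ENNReal.ofReal_le_ofReal
      have : K * Real.exp (-s * p.2) =
          K * (Real.exp (-(s - t) * p.2) * Real.exp (-t * p.2)) := by
        rw [← Real.exp_add]; ring_nf
      rw [this, mul_assoc]
      have hA : Real.exp (-(s - t) * p.2) ≤ Real.exp (-(s - t) * N') :=
        Real.exp_le_exp.mpr (by nlinarith)
      exact mul_le_mul_of_nonneg_left
        (mul_le_mul_of_nonneg_right hA (Real.exp_pos _).le) hK.le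
    have step3 : (∑' p : C',
        (ENNReal.ofReal (K * Real.exp (-(s - t) * N')) *
          ENNReal.ofReal (Real.exp (-t * ((p : M × ℕ).2 : ℝ))))) =
        ENNReal.ofReal (K * Real.exp (-(s - t) * N')) * bowenCoverSum t C' := by
      rw [bowenCoverSum, ENNReal.tsum_mul_left]
    have step4 : bowenCoverSum t C' ≤ bowenCoverSum t C := by
      exact Summable.tsum_le_tsum_of_inj (Set.inclusion hC'sub) (Set.inclusion_injective hC'sub)
        (fun _ _ => zero_le) (fun _ => le_rfl) ENNReal.summable ENNReal.summable
    have hb : ν Z ≤ ENNReal.ofReal (K * Real.exp (-(s - t) * N')) := by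
      calc ν Z ≤ ENNReal.ofReal (K * Real.exp (-(s - t) * N')) * bowenCoverSum t C' :=
            step1.trans (step2.trans_eq step3)
        _ ≤ ENNReal.ofReal (K * Real.exp (-(s - t) * N')) * 1 := by
            gcongr
            exact step4.trans hCsum.le
        _ = ENNReal.ofReal (K * Real.exp (-(s - t) * N')) := mul_one _
    refine hb.trans (ENNReal.ofReal_le_ofReal ?_)
    have hm' : (m : ℝ) ≤ N' := Nat.cast_le.mpr (le_max_right N m)
    exact mul_le_mul_of_nonneg_left (Real.exp_le_exp.mpr (by nlinarith)) hK.le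
  -- conclude: RHS tends to 0, contradiction with ν Z > 0
  have hνZtop : ν Z ≠ ⊤ := (measure_ne_top ν Z)
  have hpos : 0 < (ν Z).toReal := ENNReal.toReal_pos hνZ.ne' hνZtop
  have htend : Tendsto (fun m : ℕ => K * Real.exp (-(s - t) * m)) atTop (𝓝 0) := by
    have h1 : Tendsto (fun m : ℕ => -(s - t) * (m : ℝ)) atTop atBot := by
      apply Tendsto.const_mul_atTop_of_neg (neg_neg_iff_pos.mpr hst) tendsto_natCast_atTop_atTop
    have h2 : Tendsto (fun m : ℕ => Real.exp (-(s - t) * m)) atTop (𝓝 0) :=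
      Real.tendsto_exp_atBot.comp h1
    simpa using h2.const_mul K
  obtain ⟨m, hm⟩ := ((htend.eventually (gt_mem_nhds hpos)).exists)
  have : ν Z < ν Z := by
    calc ν Z ≤ ENNReal.ofReal (K * Real.exp (-(s - t) * m)) := main m
      _ < ν Z := by
          rw [ENNReal.ofReal_lt_iff_lt_toReal (by positivity) hνZtop]
          exact hm
  exact absurd this (lt_irrefl _)
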